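/- Let X be a measurable space, (κ_k)_{k∈ℕ} a sequence of Markov kernels from X to X, K and T measurable subsets of X, N ≥ 1, and x₀ ∈ X. Let P_{x₀} be the law on the path space X^ℕ of the time-inhomogeneous Markov chain (x_k)_{k∈ℕ} with x_0 = x₀ and x_{k+1} distributed as κ_k(x_k) conditional on x_k (constructed via the Ionescu–Tulcea theorem). Define V : ℕ → X → ℝ by V_N = 𝟙_T and V_k(x) = 𝟙_K(x)·∫ V_{k+1}(y) dκ_k(x)(y) for k < N. Then P_{x₀}{ ω ∈ X^ℕ : ω(N) ∈ T and ω(k) ∈ K for all k with 0 ≤ k ≤ N−1 } = V_0(x₀). (The backward dynamic-programming recursion computes the terminal-hitting reach-avoid probability r_{x₀}^π(K,T) = Pr{x_N ∈ T ∧ x_k ∈ K, ∀k ∈ [0,N−1]}.) -/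

import Mathlib

open MeasureTheory ProbabilityTheory

/-- The backward dynamic-programming recursion computes the terminal-hitting
reach-avoid probability. Here `P` is the law on path space `ℕ → X` of the
time-inhomogeneous Markov chain with transition kernels `κ_k` started at `x₀`
(as produced by the Ionescu–Tulcea theorem), characterized by its initial
distribution `δ_{x₀}` and the one-step Markov property with respect to the
σ-algebras generated by the coordinates `0, …, k`. -/
theorem backward_recursion_eq_reach_avoid_probability
    {X : Type*} [MeasurableSpace X]
    (κ : ℕ → Kernel X X) [∀ k, IsMarkovKernel (κ k)]
    (K T : Set X) (hK : MeasurableSet K) (hT : MeasurableSet T)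
    (N : ℕ) (hN : 1 ≤ N) (x₀ : X)
    (P : Measure (ℕ → X)) [IsProbabilityMeasure P]
    (hinit : P.map (fun ω => ω 0) = Measure.dirac x₀)
    (hmarkov : ∀ k : ℕ, ∀ A : Set X, MeasurableSet A →
      ∀ B : Set (ℕ → X),
        MeasurableSet[⨆ i : Fin (k + 1),
          MeasurableSpace.comap (fun ω : ℕ → X => ω i) ‹MeasurableSpace X›] B →
        P (B ∩ {ω | ω (k + 1) ∈ A}) = ∫⁻ ω in B, κ k (ω k) A ∂P)
    (V : ℕ → X → ℝ) (hVmeas : ∀ k, Measurable (V k))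
    (hVN : ∀ x, V N x = T.indicator (fun _ => (1 : ℝ)) x)
    (hVk : ∀ k < N, ∀ x, V k x =
      K.indicator (fun _ => (1 : ℝ)) x * ∫ y, V (k + 1) y ∂(κ k x)) :
    (P {ω | ω N ∈ T ∧ ∀ k < N, ω k ∈ K}).toReal = V 0 x₀ := by
  classical
  -- bounds on V
  have hbound : ∀ d k, k + d = N → ∀ x, 0 ≤ V k x ∧ V k x ≤ 1 := by
    intro d
    induction d with
    | zero =>
      intro k hk x
      subst hk
      simp only [Nat.add_zero] at *
      rw [hVN]
      by_cases hx : x ∈ T <;> simp [Set.indicator_apply, hx]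
    | succ d ih =>
      intro k hk x
      have hkN : k < N := by omega
      have hrec := hVk k hkN x
      have hbnd : ∀ y, 0 ≤ V (k + 1) y ∧ V (k + 1) y ≤ 1 := ih (k + 1) (by omega)
      have hint1 : (0:ℝ) ≤ ∫ y, V (k + 1) y ∂(κ k x) :=
        integral_nonneg fun y => (hbnd y).1
      have hint2 : (∫ y, V (k + 1) y ∂(κ k x)) ≤ 1 := by
        calc (∫ y, V (k + 1) y ∂(κ k x)) ≤ ∫ _, (1:ℝ) ∂(κ k x) := by
              refine integral_mono_of_nonneg (Filter.Eventually.of_forall fun y => (hbnd y).1)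
                (integrable_const 1) (Filter.Eventually.of_forall fun y => (hbnd y).2)
          _ = 1 := by simp
      rw [hrec]
      by_cases hx : x ∈ K <;>
        simp [Set.indicator_apply, hx, hint1, hint2]
  -- the "safe so far" sets
  set C : ℕ → Set (ℕ → X) := fun j => {ω | ∀ k < j, ω k ∈ K} with hC
  have hCsup : ∀ j, MeasurableSet[⨆ i : Fin (j + 1),
      MeasurableSpace.comap (fun ω : ℕ → X => ω i) ‹MeasurableSpace X›] (C (j + 1)) := by
    intro j
    have : C (j + 1) = ⋂ i : Fin (j + 1), (fun ω : ℕ → X => ω i) ⁻¹' K := by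
      ext ω
      simp only [hC, Set.mem_setOf_eq, Set.mem_iInter, Set.mem_preimage]
      constructor
      · intro h i; exact h i i.isLt
      · intro h k hk; exact h ⟨k, hk⟩
    rw [this]
    exact MeasurableSet.iInter fun i =>
      le_iSup (fun i : Fin (j + 1) =>
        MeasurableSpace.comap (fun ω : ℕ → X => ω i) ‹MeasurableSpace X›) i
        _ ⟨K, hK, rfl⟩
  have hCmeas : ∀ j, MeasurableSet (C j) := by
    intro j
    have : C j = ⋂ k ∈ Finset.range j, (fun ω : ℕ → X => ω k) ⁻¹' K := by
      ext ω; simp [hC]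
    rw [this]
    exact MeasurableSet.biInter (Set.to_countable _)
      fun k _ => (measurable_pi_apply k) hK
  -- Markov property for lintegrals
  have key : ∀ j (f : X → ENNReal), Measurable f →
      ∀ B : Set (ℕ → X), MeasurableSet[⨆ i : Fin (j + 1),
        MeasurableSpace.comap (fun ω : ℕ → X => ω i) ‹MeasurableSpace X›] B →
      MeasurableSet B →
      ∫⁻ ω in B, f (ω (j + 1)) ∂P = ∫⁻ ω in B, ∫⁻ y, f y ∂(κ j (ω j)) ∂P := by
    intro j f hf B hB hBm
    have hμ : (P.restrict B).map (fun ω => ω (j + 1))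
        = ((P.restrict B).map (fun ω => ω j)).bind (κ j) := by
      ext A hA
      rw [Measure.map_apply (measurable_pi_apply _) hA,
        Measure.restrict_apply ((measurable_pi_apply _) hA),
        Measure.bind_apply hA (κ j).measurable.aemeasurable,
        lintegral_map ((κ j).measurable_coe hA) (measurable_pi_apply j),
        Set.inter_comm]
      exact hmarkov j A hA B hB
    calc ∫⁻ ω in B, f (ω (j + 1)) ∂P
        = ∫⁻ x, f x ∂((P.restrict B).map (fun ω => ω (j + 1))) :=
          (lintegral_map hf (measurable_pi_apply _)).symm
      _ = ∫⁻ x, f x ∂(((P.restrict B).map (fun ω => ω j)).bind (κ j)) := by rw [hμ]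
      _ = ∫⁻ x, ∫⁻ y, f y ∂(κ j x) ∂((P.restrict B).map (fun ω => ω j)) :=
          Measure.lintegral_bind (κ j).measurable.aemeasurable hf.aemeasurable
      _ = ∫⁻ ω in B, ∫⁻ y, f y ∂(κ j (ω j)) ∂P :=
          lintegral_map ((Measure.measurable_lintegral hf).comp (κ j).measurable) (measurable_pi_apply j)
  -- ofReal of V relates to lintegral
  have hVof : ∀ k ≤ N, ∀ x, ENNReal.ofReal (V k x) ≤ 1 := by
    intro k hk x
    have := hbound (N - k) k (by omega) x
    exact ENNReal.ofReal_le_one.mpr this.2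
  -- main downward induction
  have main : ∀ d, d ≤ N →
      P {ω | ω N ∈ T ∧ ∀ k < N, ω k ∈ K}
        = ∫⁻ ω in C (N - d), ENNReal.ofReal (V (N - d) (ω (N - d))) ∂P := by
    intro d
    induction d with
    | zero =>
      intro _
      simp only [Nat.sub_zero]
      have hEq : ∀ ω : ℕ → X, ENNReal.ofReal (V N (ω N))
          = Set.indicator ((fun ω : ℕ → X => ω N) ⁻¹' T) (fun _ => (1:ENNReal)) ω := by
        intro ω
        rw [hVN]
        by_cases hx : ω N ∈ T <;> simp [Set.indicator_apply, hx]
      rw [lintegral_congr hEq, lintegral_indicator ((measurable_pi_apply N) hT) _,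
        setLIntegral_one, Measure.restrict_apply ((measurable_pi_apply N) hT)]
      congr 1
    | succ d ih =>
      intro hd
      have hdN : d < N := by omega
      have hrw : N - d = (N - (d + 1)) + 1 := by omega
      set j := N - (d + 1) with hj
      have hjN : j < N := by omega
      have hjle : j + 1 ≤ N := by omega
      rw [ih (by omega), hrw]
      -- step: from j+1 to j
      have hstep := key j (fun y => ENNReal.ofReal (V (j + 1) y))
        ((hVmeas (j + 1)).ennreal_ofReal) (C (j + 1)) (hCsup j)
        (hCmeas (j + 1))
      rw [hstep]
      -- rewrite inner lintegral as ofReal of the integral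
      have hinner : ∀ x : X, ∫⁻ y, ENNReal.ofReal (V (j + 1) y) ∂(κ j x)
          = ENNReal.ofReal (∫ y, V (j + 1) y ∂(κ j x)) := by
        intro x
        rw [integral_eq_lintegral_of_nonneg_ae
          (Filter.Eventually.of_forall fun y => (hbound (N - (j+1)) (j+1) (by omega) y).1)
          (hVmeas (j + 1)).aestronglyMeasurable]
        rw [ENNReal.ofReal_toReal]
        refine ne_of_lt (lt_of_le_of_lt ?_ (by norm_num : (1:ENNReal) < ⊤))
        calc ∫⁻ y, ENNReal.ofReal (V (j + 1) y) ∂(κ j x)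
            ≤ ∫⁻ _, 1 ∂(κ j x) := lintegral_mono fun y => hVof (j + 1) hjle y
          _ = 1 := by simp
      have hCsplit : C (j + 1) = C j ∩ K.preimage (fun ω : ℕ → X => ω j) ∩ Set.univ := by
        ext ω
        simp only [hC, Set.mem_inter_iff, Set.mem_setOf_eq, Set.mem_preimage,
          Set.mem_univ, and_true]
        constructor
        · intro h; exact ⟨fun k hk => h k (by omega), h j (by omega)⟩
        · rintro ⟨h1, h2⟩ k hk
          rcases Nat.lt_or_ge k j with hkj | hkj
          · exact h1 k hkj
          · have : k = j := by omega
            subst this; exact h2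
      calc ∫⁻ ω in C (j + 1), ∫⁻ y, ENNReal.ofReal (V (j + 1) y) ∂(κ j (ω j)) ∂P
          = ∫⁻ ω in C (j + 1), ENNReal.ofReal (∫ y, V (j + 1) y ∂(κ j (ω j))) ∂P := by
            exact lintegral_congr fun ω => hinner (ω j)
        _ = ∫⁻ ω in C j, ENNReal.ofReal (V j (ω j)) ∂P := by
            have hVind : ∀ ω : ℕ → X, ENNReal.ofReal (V j (ω j))
                = Set.indicator ((fun ω : ℕ → X => ω j) ⁻¹' K)
                  (fun ω : ℕ → X => ENNReal.ofReal (∫ y, V (j + 1) y ∂(κ j (ω j)))) ω := by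
              intro ω
              rw [hVk j hjN]
              by_cases hx : ω j ∈ K <;>
                simp [Set.indicator_apply, hx]
            rw [lintegral_congr hVind,
              lintegral_indicator ((measurable_pi_apply j) hK) _,
              Measure.restrict_restrict ((measurable_pi_apply j) hK)]
            have : (fun ω : ℕ → X => ω j) ⁻¹' K ∩ C j = C (j + 1) := by
              rw [hCsplit]; ext ω
              simp only [Set.inter_univ, Set.mem_inter_iff, Set.mem_preimage]
              tauto
            rw [this]
  -- conclude
  have h0 := main N (le_refl N)
  have hC0 : C 0 = Set.univ := by
    ext ω; simp [hC]
  rw [Nat.sub_self] at h0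
  rw [hC0, Measure.restrict_univ] at h0
  have hmap : ∫⁻ ω, ENNReal.ofReal (V 0 (ω 0)) ∂P
      = ∫⁻ x, ENNReal.ofReal (V 0 x) ∂(P.map (fun ω => ω 0)) :=
    (lintegral_map ((hVmeas 0).ennreal_ofReal) (measurable_pi_apply 0)).symm
  rw [hmap, hinit, lintegral_dirac' _ ((hVmeas 0).ennreal_ofReal)] at h0
  rw [h0, ENNReal.toReal_ofReal (hbound N 0 (by omega) x₀).1]
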